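/- arXiv:1709.08556 — 6 statements merged into one kernel-verified Lean document; each statement's English description precedes it below -/
import Mathlib

section
/- Let r, z, R be positive reals satisfying R/r = cosh(z/r), R/z = sinh(z/r), and R² + z² = 1. Then r = z·R and 1/R = coth(1/R). -/
/-- If positive reals `r, z, R` satisfy `R/r = cosh(z/r)`, `R/z = sinh(z/r)` and
`R² + z² = 1`, then `r = z·R` and `1/R = coth(1/R)`. -/
theorem stmt_1 (r z R : ℝ) (hr : 0 < r) (hz : 0 < z) (hR : 0 < R)
    (h1 : R / r = Real.cosh (z / r)) (h2 : R / z = Real.sinh (z / r))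
    (h3 : R ^ 2 + z ^ 2 = 1) :
    r = z * R ∧ 1 / R = Real.cosh (1 / R) / Real.sinh (1 / R) := by
  have hc := Real.cosh_sq_sub_sinh_sq (z / r)
  rw [← h1, ← h2] at hc
  have hc' : R ^ 2 * z ^ 2 - R ^ 2 * r ^ 2 = r ^ 2 * z ^ 2 := by
    field_simp at hc
    nlinarith [hc]
  have hr2 : r ^ 2 = (z * R) ^ 2 := by nlinarith [hc', h3]
  have hrzR : r = z * R := by nlinarith [hr2, mul_pos hz hR, sq_nonneg (r - z * R)]
  refine ⟨hrzR, ?_⟩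
  have hzr : z / r = 1 / R := by
    rw [hrzR]; field_simp
  rw [← hzr, ← h1, ← h2]
  have hs : (0:ℝ) < R / z := by positivity
  field_simp
end

section
/- For every h ∈ (0,1), setting r̃ = h·√(1−h²) and z̃ = h − r̃·arcsinh(√(1−h²)/h), the function h ↦ z̃/r̃ is differentiable with derivative (d/dh)(z̃/r̃) = 1/(h·(1−h²)^{3/2}), which is strictly positive. -/
/-- For `h ∈ (0,1)`, with `r̃ = h√(1−h²)` and `z̃ = h − r̃·arcsinh(√(1−h²)/h)`,
the function `h ↦ z̃/r̃` has derivative `1/(h(1−h²)^{3/2})`, which is positive. -/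
theorem stmt_2 (h : ℝ) (hh : h ∈ Set.Ioo (0 : ℝ) 1) :
    HasDerivAt
      (fun h : ℝ =>
        (h - h * Real.sqrt (1 - h ^ 2) * Real.arsinh (Real.sqrt (1 - h ^ 2) / h)) /
          (h * Real.sqrt (1 - h ^ 2)))
      (1 / (h * (1 - h ^ 2) ^ ((3 : ℝ) / 2))) h ∧
    0 < 1 / (h * (1 - h ^ 2) ^ ((3 : ℝ) / 2)) := by
  obtain ⟨hh0, hh1⟩ := hh
  have h1sq : (0:ℝ) < 1 - h ^ 2 := by nlinarith
  set s := Real.sqrt (1 - h ^ 2) with hs_def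
  have hs0 : 0 < s := Real.sqrt_pos.mpr h1sq
  have hs2 : s ^ 2 = 1 - h ^ 2 := Real.sq_sqrt h1sq.le
  -- derivative of sqrt(1 - x^2)
  have hinner : HasDerivAt (fun x : ℝ => 1 - x ^ 2) (-(2 * h)) h := by
    have := (hasDerivAt_pow 2 h).const_sub 1
    simpa using this
  have hsqrt : HasDerivAt (fun x : ℝ => Real.sqrt (1 - x ^ 2)) (-h / s) h := by
    have := (Real.hasDerivAt_sqrt (by positivity : (1:ℝ) - h ^ 2 ≠ 0)).comp h hinner
    refine this.congr_deriv ?_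
    field_simp
    ring
  -- derivative of 1 / sqrt(1 - x^2)
  have hinv : HasDerivAt (fun x : ℝ => (Real.sqrt (1 - x ^ 2))⁻¹) (h / s ^ 3) h := by
    have := hsqrt.inv hs0.ne'
    refine this.congr_deriv ?_
    rw [← hs2]
    field_simp
    rw [Real.sq_sqrt (sq_nonneg s)]
  -- derivative of arsinh(sqrt(1-x^2)/x)
  have hu : HasDerivAt (fun x : ℝ => Real.sqrt (1 - x ^ 2) / x) (-1 / (s * h ^ 2)) h := by
    have := hsqrt.div (hasDerivAt_id h) hh0.ne'
    refine this.congr_deriv ?_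
    simp only [id, ← hs_def]
    field_simp
    nlinarith [hs2]
  have harsinh : HasDerivAt
      (fun x : ℝ => Real.arsinh (Real.sqrt (1 - x ^ 2) / x)) (-1 / (h * s)) h := by
    have hcomp := hu.arsinh
    have hval : Real.sqrt (1 + (Real.sqrt (1 - h ^ 2) / h) ^ 2) = 1 / h := by
      rw [show 1 + (Real.sqrt (1 - h ^ 2) / h) ^ 2 = (1 / h) ^ 2 by
        field_simp; rw [Real.sq_sqrt h1sq.le]; ring]
      exact Real.sqrt_sq (by positivity)
    refine hcomp.congr_deriv ?_
    rw [hval, smul_eq_mul]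
    field_simp
  -- the simplified function
  have hg : HasDerivAt
      (fun x : ℝ => (Real.sqrt (1 - x ^ 2))⁻¹ - Real.arsinh (Real.sqrt (1 - x ^ 2) / x))
      (1 / (h * s ^ 3)) h := by
    have := hinv.sub harsinh
    refine this.congr_deriv ?_
    rw [show h / s ^ 3 - -1 / (h * s) = (h ^ 2 + s ^ 2) / (h * s ^ 3) from by
      field_simp; ring, hs2]
    norm_num
  have key : HasDerivAt
      (fun h : ℝ =>
        (h - h * Real.sqrt (1 - h ^ 2) * Real.arsinh (Real.sqrt (1 - h ^ 2) / h)) /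
          (h * Real.sqrt (1 - h ^ 2)))
      (1 / (h * s ^ 3)) h := by
    apply hg.congr_of_eventuallyEq
    have : Set.Ioo (0:ℝ) 1 ∈ nhds h := (isOpen_Ioo).mem_nhds ⟨hh0, hh1⟩
    filter_upwards [this] with x hx
    obtain ⟨hx0, hx1⟩ := hx
    have hx1sq : (0:ℝ) < 1 - x ^ 2 := by nlinarith
    have hsx : 0 < Real.sqrt (1 - x ^ 2) := Real.sqrt_pos.mpr hx1sq
    field_simp
  have hpow : (1 - h ^ 2) ^ ((3:ℝ)/2) = s ^ 3 := by
    rw [show ((3:ℝ)/2) = (1/2) * 3 by norm_num, Real.rpow_mul h1sq.le,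
      ← Real.sqrt_eq_rpow, show ((3:ℝ)) = ((3:ℕ):ℝ) by norm_num, Real.rpow_natCast]
  constructor
  · rw [hpow]; exact key
  · rw [hpow]; positivity
end

section
/- For all h ∈ (0,1), the inequality (3 − 2h²)/(2√(1−h²)) ≥ √2 holds, and consequently (3 − 2h²)·sinh(1/√(1−h²)) − 2√(1−h²)·cosh(1/√(1−h²)) > 0. -/
lemma sqrt2_lt : Real.sqrt 2 < 1.5 := by
  rw [show (1.5:ℝ) = Real.sqrt (1.5^2) by rw [Real.sqrt_sq]; norm_num]
  apply Real.sqrt_lt_sqrt <;> norm_num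

lemma one_lt_sqrt2 : 1 < Real.sqrt 2 := by
  rw [show (1:ℝ) = Real.sqrt 1 by simp]
  apply Real.sqrt_lt_sqrt <;> norm_num

lemma cosh_lt (x : ℝ) (hx : 1 ≤ x) : Real.cosh x < Real.sqrt 2 * Real.sinh x := by
  rw [Real.cosh_eq, Real.sinh_eq]
  have ht : (2.7:ℝ) < Real.exp x := by
    calc (2.7:ℝ) < Real.exp 1 := by
            have := Real.exp_one_gt_d9; linarith
      _ ≤ Real.exp x := Real.exp_le_exp.mpr hx
  have htinv : Real.exp (-x) = 1 / Real.exp x := by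
    rw [Real.exp_neg]; ring
  have hpos : (0:ℝ) < Real.exp x := Real.exp_pos x
  rw [htinv]
  have h2 := sqrt2_lt
  have h1 := one_lt_sqrt2
  have hinv : Real.exp x * (1 / Real.exp x) = 1 := by field_simp
  nlinarith [Real.sq_sqrt (by norm_num : (0:ℝ) ≤ 2), sq_nonneg (Real.exp x - 2.7),
    mul_pos hpos (show (0:ℝ) < 1/Real.exp x by positivity)]

/-- For `h ∈ (0,1)` we have `(3 − 2h²)/(2√(1−h²)) ≥ √2`, and consequently
`(3 − 2h²)·sinh(1/√(1−h²)) − 2√(1−h²)·cosh(1/√(1−h²)) > 0`. -/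
theorem stmt_3 (h : ℝ) (hh : h ∈ Set.Ioo (0 : ℝ) 1) :
    Real.sqrt 2 ≤ (3 - 2 * h ^ 2) / (2 * Real.sqrt (1 - h ^ 2)) ∧
    0 < (3 - 2 * h ^ 2) * Real.sinh (1 / Real.sqrt (1 - h ^ 2)) -
        2 * Real.sqrt (1 - h ^ 2) * Real.cosh (1 / Real.sqrt (1 - h ^ 2)) := by
  obtain ⟨h0, h1⟩ := hh
  set s := Real.sqrt (1 - h ^ 2) with hs
  have hs2 : s ^ 2 = 1 - h ^ 2 := Real.sq_sqrt (by nlinarith)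
  have hsp : 0 < s := Real.sqrt_pos.mpr (by nlinarith)
  have hs1 : s ≤ 1 := by
    nlinarith [Real.sqrt_nonneg (1 - h^2)]
  have hkey : 2 * Real.sqrt 2 * s ≤ 3 - 2 * h ^ 2 := by
    nlinarith [sq_nonneg (Real.sqrt 2 * s - 1), Real.sq_sqrt (by norm_num : (2:ℝ) ≥ 0)]
  constructor
  · rw [le_div_iff₀ (by positivity)]
    linarith
  · have hx : 1 ≤ 1 / s := (le_div_iff₀ hsp).mpr (by linarith)
    have hc := cosh_lt (1 / s) hx
    have hsinh : 0 < Real.sinh (1 / s) := Real.sinh_pos_iff.mpr (by positivity)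
    nlinarith [mul_le_mul_of_nonneg_right hkey hsinh.le,
      mul_lt_mul_of_pos_left hc (by positivity : (0:ℝ) < 2 * s)]
end

section
/- For h ∈ (0,1), let r̂(h) = r̃·cosh(z̃/r̃) with r̃ = h√(1−h²) and z̃ = h − r̃·arcsinh(√(1−h²)/h). Then r̂ is strictly increasing on (0,1). -/
lemma phi_pos {u : ℝ} (hu : 0 < u) :
    0 < (u ^ 2 + 2) * Real.sinh u - 2 * u * Real.cosh u := by
  have key : StrictMonoOn
      (fun u : ℝ => (u ^ 2 + 2) * Real.sinh u - 2 * u * Real.cosh u) (Set.Ici 0) := by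
    apply strictMonoOn_of_deriv_pos (convex_Ici 0)
    · fun_prop
    · intro x hx
      rw [interior_Ici] at hx
      have h1 : HasDerivAt (fun u : ℝ => (u ^ 2 + 2) * Real.sinh u - 2 * u * Real.cosh u)
          ((2 * x) * Real.sinh x + (x ^ 2 + 2) * Real.cosh x
            - (2 * Real.cosh x + 2 * x * Real.sinh x)) x := by
        have := (((hasDerivAt_pow 2 x).add_const 2).mul (Real.hasDerivAt_sinh x)).sub
          (((hasDerivAt_id x).const_mul 2).mul (Real.hasDerivAt_cosh x))
        refine HasDerivAt.congr_deriv this ?_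
        simp only [id_eq]
        push_cast
        ring
      rw [h1.deriv]
      have h2 : (2 * x) * Real.sinh x + (x ^ 2 + 2) * Real.cosh x
          - (2 * Real.cosh x + 2 * x * Real.sinh x) = x ^ 2 * Real.cosh x := by ring
      rw [h2]
      exact mul_pos (pow_pos hx 2) (Real.cosh_pos x)
  have h0 := key Set.self_mem_Ici (Set.mem_Ici.mpr hu.le) hu
  simpa using h0

noncomputable def fAux (h : ℝ) : ℝ :=
  Real.sqrt (1 - h ^ 2) * Real.cosh (Real.sqrt (1 - h ^ 2))⁻¹
    - (1 - h ^ 2) * Real.sinh (Real.sqrt (1 - h ^ 2))⁻¹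

lemma fAux_deriv {h : ℝ} (h0 : 0 < h) (h1 : h < 1) :
    HasDerivAt fAux
      (h * (((Real.sqrt (1 - h ^ 2))⁻¹ ^ 2 + 2) * Real.sinh (Real.sqrt (1 - h ^ 2))⁻¹
        - 2 * (Real.sqrt (1 - h ^ 2))⁻¹ * Real.cosh (Real.sqrt (1 - h ^ 2))⁻¹)) h := by
  have hpos : 0 < 1 - h ^ 2 := by nlinarith
  set S := Real.sqrt (1 - h ^ 2) with hS
  have hSpos : 0 < S := Real.sqrt_pos.mpr hpos
  have hSsq : S ^ 2 = 1 - h ^ 2 := Real.sq_sqrt hpos.le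
  have hp : HasDerivAt (fun h : ℝ => 1 - h ^ 2) (-(2 * h)) h := by
    simpa using ((hasDerivAt_pow 2 h).const_sub 1)
  have hq : HasDerivAt (fun h : ℝ => Real.sqrt (1 - h ^ 2)) (-(h / S)) h := by
    have := (Real.hasDerivAt_sqrt hpos.ne').comp h hp
    refine HasDerivAt.congr_deriv this ?_
    rw [← hS]
    field_simp
  have hinv : HasDerivAt (fun h : ℝ => (Real.sqrt (1 - h ^ 2))⁻¹) (h / S ^ 3) h := by
    have := hq.inv hSpos.ne'
    refine HasDerivAt.congr_deriv this ?_
    field_simp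
    rw [← hS]
  have hcosh : HasDerivAt (fun h : ℝ => Real.cosh (Real.sqrt (1 - h ^ 2))⁻¹)
      (Real.sinh S⁻¹ * (h / S ^ 3)) h :=
    (Real.hasDerivAt_cosh _).comp h hinv
  have hsinh : HasDerivAt (fun h : ℝ => Real.sinh (Real.sqrt (1 - h ^ 2))⁻¹)
      (Real.cosh S⁻¹ * (h / S ^ 3)) h :=
    (Real.hasDerivAt_sinh _).comp h hinv
  have hA := hq.mul hcosh
  have hB := hp.mul hsinh
  have := hA.sub hB
  refine HasDerivAt.congr_deriv this ?_
  rw [← hS, ← hSsq]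
  field_simp
  ring

lemma fAux_mono : StrictMonoOn fAux (Set.Ioo 0 1) := by
  apply strictMonoOn_of_deriv_pos (convex_Ioo 0 1)
  · intro x hx
    exact (fAux_deriv hx.1 hx.2).continuousAt.continuousWithinAt
  · intro x hx
    rw [interior_Ioo] at hx
    rw [(fAux_deriv hx.1 hx.2).deriv]
    have hpos : 0 < 1 - x ^ 2 := by nlinarith [hx.1, hx.2]
    have hSpos : 0 < Real.sqrt (1 - x ^ 2) := Real.sqrt_pos.mpr hpos
    have hu : 0 < (Real.sqrt (1 - x ^ 2))⁻¹ := by positivity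
    exact mul_pos hx.1 (phi_pos hu)

lemma key_eq {h : ℝ} (h0 : 0 < h) (h1 : h < 1) :
    h * Real.sqrt (1 - h ^ 2) *
      Real.cosh ((h - h * Real.sqrt (1 - h ^ 2) * Real.arsinh (Real.sqrt (1 - h ^ 2) / h)) /
          (h * Real.sqrt (1 - h ^ 2))) = fAux h := by
  have hpos : 0 < 1 - h ^ 2 := by nlinarith
  set S := Real.sqrt (1 - h ^ 2) with hS
  have hSpos : 0 < S := Real.sqrt_pos.mpr hpos
  have hSsq : S ^ 2 = 1 - h ^ 2 := Real.sq_sqrt hpos.le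
  have harg : (h - h * S * Real.arsinh (S / h)) / (h * S) = S⁻¹ - Real.arsinh (S / h) := by
    field_simp
  rw [harg, Real.cosh_sub, Real.sinh_arsinh, Real.cosh_arsinh]
  have hsq : Real.sqrt (1 + (S / h) ^ 2) = 1 / h := by
    have : 1 + (S / h) ^ 2 = (1 / h) ^ 2 := by
      rw [div_pow, div_pow, hSsq]
      field_simp
      ring
    rw [this, Real.sqrt_sq (by positivity)]
  rw [hsq]
  unfold fAux
  rw [← hS, ← hSsq]
  field_simp

/-- The function `r̂(h) = r̃·cosh(z̃/r̃)`, with `r̃ = h√(1−h²)` and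
`z̃ = h − r̃·arcsinh(√(1−h²)/h)`, is strictly increasing on `(0,1)`. -/
theorem stmt_4 :
    StrictMonoOn
      (fun h : ℝ =>
        h * Real.sqrt (1 - h ^ 2) *
          Real.cosh
            ((h - h * Real.sqrt (1 - h ^ 2) * Real.arsinh (Real.sqrt (1 - h ^ 2) / h)) /
              (h * Real.sqrt (1 - h ^ 2))))
      (Set.Ioo 0 1) := by
  intro a ha b hb hab
  simp only
  rw [key_eq ha.1 ha.2, key_eq hb.1 hb.2]
  exact fAux_mono ha hb hab
end

section
/- The function φ_even(x) = 1 − sin x · log((1 + sin x)/cos x) satisfies φ_even(0) = 1, is strictly decreasing on (0, π/2), tends to −∞ as x → π/2⁻, and therefore has a unique root x_crit in (0, π/2); moreover x_crit > π/4. -/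
open Real Set Filter

noncomputable def phiE (x : ℝ) : ℝ := 1 - Real.sin x * Real.log ((1 + Real.sin x) / Real.cos x)

lemma ratio_gt_one {x : ℝ} (hx : x ∈ Set.Ioo 0 (π/2)) :
    1 < (1 + Real.sin x) / Real.cos x := by
  have hc : 0 < Real.cos x := Real.cos_pos_of_mem_Ioo ⟨by linarith [hx.1, pi_pos], hx.2⟩
  have hs : 0 < Real.sin x := Real.sin_pos_of_pos_of_lt_pi hx.1 (by linarith [hx.2, pi_pos])
  rw [lt_div_iff₀ hc]
  have := Real.cos_le_one x
  linarith

lemma ratio_mono : StrictMonoOn (fun x => (1 + Real.sin x) / Real.cos x) (Set.Ioo 0 (π/2)) := by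
  intro x hx y hy hxy
  have hcx : 0 < Real.cos x := Real.cos_pos_of_mem_Ioo ⟨by linarith [hx.1, pi_pos], hx.2⟩
  have hcy : 0 < Real.cos y := Real.cos_pos_of_mem_Ioo ⟨by linarith [hy.1, pi_pos], hy.2⟩
  have hsx : 0 < Real.sin x := Real.sin_pos_of_pos_of_lt_pi hx.1 (by linarith [hx.2, pi_pos])
  have hss : Real.sin x < Real.sin y := by
    apply Real.strictMonoOn_sin ⟨by linarith [hx.1, pi_pos], le_of_lt hx.2⟩
      ⟨by linarith [hy.1, pi_pos], le_of_lt hy.2⟩ hxy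
  have hcc : Real.cos y < Real.cos x := by
    apply Real.strictAntiOn_cos ⟨le_of_lt hx.1, by linarith [hx.2, pi_pos]⟩
      ⟨le_of_lt hy.1, by linarith [hy.2, pi_pos]⟩ hxy
  simp only
  rw [div_lt_div_iff₀ hcx hcy]
  nlinarith

lemma anti : StrictAntiOn (fun x : ℝ => 1 - Real.sin x * Real.log ((1 + Real.sin x) / Real.cos x))
    (Set.Ioo 0 (π/2)) := by
  intro x hx y hy hxy
  have hsx : 0 < Real.sin x := Real.sin_pos_of_pos_of_lt_pi hx.1 (by linarith [hx.2, pi_pos])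
  have hsy : 0 ≤ Real.sin y := le_of_lt (Real.sin_pos_of_pos_of_lt_pi hy.1 (by linarith [hy.2, pi_pos]))
  have hss : Real.sin x < Real.sin y := by
    apply Real.strictMonoOn_sin ⟨by linarith [hx.1, pi_pos], le_of_lt hx.2⟩
      ⟨by linarith [hy.1, pi_pos], le_of_lt hy.2⟩ hxy
  have hrx : 1 < (1 + Real.sin x) / Real.cos x := ratio_gt_one hx
  have hlx : 0 < Real.log ((1 + Real.sin x) / Real.cos x) := Real.log_pos hrx
  have hll : Real.log ((1 + Real.sin x) / Real.cos x) < Real.log ((1 + Real.sin y) / Real.cos y) :=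
    Real.log_lt_log (by linarith) (ratio_mono hx hy hxy)
  have : Real.sin x * Real.log ((1 + Real.sin x) / Real.cos x)
      < Real.sin y * Real.log ((1 + Real.sin y) / Real.cos y) :=
    mul_lt_mul hss (le_of_lt hll) hlx hsy
  simp only
  linarith

lemma val_pi4 : Real.sin (π/4) * Real.log ((1 + Real.sin (π/4)) / Real.cos (π/4)) < 1 := by
  rw [Real.sin_pi_div_four, Real.cos_pi_div_four]
  have h2 : (0:ℝ) < Real.sqrt 2 := Real.sqrt_pos.mpr (by norm_num)
  have hsq : Real.sqrt 2 * Real.sqrt 2 = 2 := Real.mul_self_sqrt (by norm_num)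
  have hratio : (1 + Real.sqrt 2 / 2) / (Real.sqrt 2 / 2) = Real.sqrt 2 + 1 := by
    field_simp
    nlinarith
  rw [hratio]
  have h15 : Real.sqrt 2 < 1.5 := by nlinarith
  have hloglt : Real.log (Real.sqrt 2 + 1) < 1 := by
    have he := Real.exp_one_gt_d9
    have : Real.log (Real.sqrt 2 + 1) < Real.log (Real.exp 1) :=
      Real.log_lt_log (by linarith) (by linarith)
    rwa [Real.log_exp] at this
  have hlogpos : 0 < Real.log (Real.sqrt 2 + 1) := Real.log_pos (by nlinarith)
  have hs1 : Real.sqrt 2 / 2 < 1 := by linarith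
  nlinarith

lemma tends : Filter.Tendsto (fun x : ℝ => 1 - Real.sin x * Real.log ((1 + Real.sin x) / Real.cos x))
    (nhdsWithin (π / 2) (Set.Iio (π / 2))) Filter.atBot := by
  have hmem : Set.Ioo 0 (π/2) ∈ nhdsWithin (π/2) (Set.Iio (π/2)) :=
    Ioo_mem_nhdsLT_of_mem ⟨by linarith [pi_pos], le_refl _⟩
  have hcos : Filter.Tendsto Real.cos (nhdsWithin (π/2) (Set.Iio (π/2))) (nhdsWithin 0 (Set.Ioi 0)) := by
    apply tendsto_nhdsWithin_of_tendsto_nhds_of_eventually_within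
    · have := Real.continuous_cos.continuousAt (x := π/2)
      simpa [Real.cos_pi_div_two] using this.mono_left nhdsWithin_le_nhds
    · filter_upwards [hmem] with x hx
      exact Real.cos_pos_of_mem_Ioo ⟨by linarith [hx.1, pi_pos], hx.2⟩
  have hinv : Filter.Tendsto (fun x => (Real.cos x)⁻¹) (nhdsWithin (π/2) (Set.Iio (π/2))) Filter.atTop :=
    tendsto_inv_nhdsGT_zero.comp hcos
  have hone : Filter.Tendsto (fun x => 1 + Real.sin x) (nhdsWithin (π/2) (Set.Iio (π/2))) (nhds 2) := by
    have : Filter.Tendsto (fun x => 1 + Real.sin x) (nhds (π/2)) (nhds (1 + Real.sin (π/2))) :=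
      (continuous_const.add Real.continuous_sin).continuousAt
    simpa [Real.sin_pi_div_two, (by norm_num : (1:ℝ)+1 = 2)] using this.mono_left nhdsWithin_le_nhds
  have hratio : Filter.Tendsto (fun x => (1 + Real.sin x) / Real.cos x)
      (nhdsWithin (π/2) (Set.Iio (π/2))) Filter.atTop := by
    simp only [div_eq_mul_inv]
    exact Filter.Tendsto.pos_mul_atTop (by norm_num) hone hinv
  have hlog : Filter.Tendsto (fun x => Real.log ((1 + Real.sin x) / Real.cos x))
      (nhdsWithin (π/2) (Set.Iio (π/2))) Filter.atTop :=
    Real.tendsto_log_atTop.comp hratio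
  have hsin : Filter.Tendsto Real.sin (nhdsWithin (π/2) (Set.Iio (π/2))) (nhds 1) := by
    have := Real.continuous_sin.continuousAt (x := π/2)
    simpa [Real.sin_pi_div_two] using this.mono_left nhdsWithin_le_nhds
  have hmul : Filter.Tendsto (fun x => Real.sin x * Real.log ((1 + Real.sin x) / Real.cos x))
      (nhdsWithin (π/2) (Set.Iio (π/2))) Filter.atTop :=
    Filter.Tendsto.pos_mul_atTop one_pos hsin hlog
  have := (tendsto_neg_atBot_iff.mpr hmul)
  have := Filter.tendsto_atBot_add_const_left _ 1 this
  simpa [sub_eq_add_neg] using this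

/-- `φ_even(x) = 1 − sin x·log((1+sin x)/cos x)` satisfies `φ_even(0) = 1`, is strictly
decreasing on `(0, π/2)`, tends to `−∞` as `x → π/2⁻`, has a unique root `x_crit` in
`(0, π/2)`, and this root is greater than `π/4`. -/
theorem stmt_9 :
    (1 - Real.sin 0 * Real.log ((1 + Real.sin 0) / Real.cos 0) = 1) ∧
    StrictAntiOn (fun x : ℝ => 1 - Real.sin x * Real.log ((1 + Real.sin x) / Real.cos x))
      (Set.Ioo 0 (Real.pi / 2)) ∧
    Filter.Tendsto (fun x : ℝ => 1 - Real.sin x * Real.log ((1 + Real.sin x) / Real.cos x))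
      (nhdsWithin (Real.pi / 2) (Set.Iio (Real.pi / 2))) Filter.atBot ∧
    (∃! x : ℝ, x ∈ Set.Ioo 0 (Real.pi / 2) ∧
      1 - Real.sin x * Real.log ((1 + Real.sin x) / Real.cos x) = 0) ∧
    (∀ x ∈ Set.Ioo 0 (Real.pi / 2),
      1 - Real.sin x * Real.log ((1 + Real.sin x) / Real.cos x) = 0 → Real.pi / 4 < x) := by
  set f : ℝ → ℝ := fun x => 1 - Real.sin x * Real.log ((1 + Real.sin x) / Real.cos x) with hf
  have hpi4mem : π/4 ∈ Set.Ioo 0 (π/2) := ⟨by linarith [pi_pos], by linarith [pi_pos]⟩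
  have hfpi4 : 0 < f (π/4) := by
    have := val_pi4; simp only [hf]; linarith
  -- get b with f b < 0
  obtain ⟨b, hfb, hbmem⟩ : ∃ b, f b < 0 ∧ b ∈ Set.Ioo (π/4) (π/2) := by
    have h1 : ∀ᶠ x in nhdsWithin (π/2) (Set.Iio (π/2)), f x < 0 :=
      tends.eventually (Filter.eventually_lt_atBot 0)
    have h2 : Set.Ioo (π/4) (π/2) ∈ nhdsWithin (π/2) (Set.Iio (π/2)) :=
      Ioo_mem_nhdsLT_of_mem ⟨by linarith [pi_pos], le_refl _⟩
    exact (h1.and h2).exists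
  have hbsub : Set.Icc (π/4) b ⊆ Set.Ioo 0 (π/2) := fun z hz =>
    ⟨by linarith [hz.1, pi_pos], by linarith [hz.2, hbmem.2]⟩
  have hcont : ContinuousOn f (Set.Icc (π/4) b) := by
    apply ContinuousOn.sub continuousOn_const
    apply ContinuousOn.mul Real.continuous_sin.continuousOn
    apply ContinuousOn.log
    · apply ContinuousOn.div (continuous_const.add Real.continuous_sin).continuousOn
        Real.continuous_cos.continuousOn
      intro z hz
      exact ne_of_gt (Real.cos_pos_of_mem_Ioo ⟨by linarith [(hbsub hz).1, pi_pos], (hbsub hz).2⟩)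
    · intro z hz
      exact ne_of_gt (lt_trans one_pos (ratio_gt_one (hbsub hz)))
  obtain ⟨c, hcmem, hfc⟩ : ∃ c ∈ Set.Icc (π/4) b, f c = 0 := by
    have h0 : (0:ℝ) ∈ Set.Icc (f b) (f (π/4)) := ⟨le_of_lt hfb, le_of_lt hfpi4⟩
    have := intermediate_value_Icc' (le_of_lt hbmem.1) hcont
    obtain ⟨c, hc1, hc2⟩ := this h0
    exact ⟨c, hc1, hc2⟩
  have hcIoo : c ∈ Set.Ioo 0 (π/2) := hbsub hcmem
  have hroot_gt : ∀ x ∈ Set.Ioo 0 (π/2), f x = 0 → π/4 < x := by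
    intro x hx hfx
    by_contra hle
    push_neg at hle
    rcases eq_or_lt_of_le hle with heq | hlt
    · rw [heq] at hfx; linarith
    · have := anti hx hpi4mem hlt
      simp only [hf] at this hfx
      linarith [hfpi4]
  refine ⟨by simp, anti, tends, ⟨c, ⟨hcIoo, hfc⟩, ?_⟩, hroot_gt⟩
  intro y hy
  rcases lt_trichotomy y c with h | h | h
  · exfalso
    have h1 := anti hy.1 hcIoo h
    have h2 : f c = 0 := hfc
    simp only [hf] at h1 h2
    rw [hy.2, h2] at h1
    exact lt_irrefl 0 h1
  · exact h
  · exfalso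
    have h1 := anti hcIoo hy.1 h
    have h2 : f c = 0 := hfc
    simp only [hf] at h1 h2
    rw [hy.2, h2] at h1
    exact lt_irrefl 0 h1
end

section
/- Suppose f solves f'' − tan(x)·f' + 2f = 0 on [0, x_c] with f(0) = 0 and the Robin condition −cot(x_c)·f'(x_c) + f(x_c) = 0, where x_c ∈ (0, π/2) and x_c ≠ π/4. If additionally sin x_c · log((1+sin x_c)/cos x_c) = 1 (i.e. φ_even(x_c) = 0), then f ≡ 0. -/
open Set Real Filter Topology

set_option linter.unusedVariables false


/-- If `f` solves `f'' − tan(x)·f' + 2f = 0` on `[0, x_c]` with `f(0) = 0` and the Robin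
condition `−cot(x_c)·f'(x_c) + f(x_c) = 0`, where `x_c ∈ (0, π/2)`, `x_c ≠ π/4`, and
`φ_even(x_c) = 0` (i.e. `sin x_c·log((1+sin x_c)/cos x_c) = 1`), then `f ≡ 0`. -/
theorem stmt_10 (xc : ℝ) (hxc : xc ∈ Set.Ioo 0 (Real.pi / 2)) (hne : xc ≠ Real.pi / 4)
    (hroot : Real.sin xc * Real.log ((1 + Real.sin xc) / Real.cos xc) = 1)
    (f : ℝ → ℝ) (hreg : ContDiffOn ℝ 2 f (Set.Icc 0 xc))
    (hode : ∀ x ∈ Set.Ioo 0 xc,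
      deriv (deriv f) x - Real.tan x * deriv f x + 2 * f x = 0)
    (hdir : f 0 = 0)
    (hrob : -(Real.cos xc / Real.sin xc) * derivWithin f (Set.Icc 0 xc) xc + f xc = 0) :
    ∀ x ∈ Set.Icc 0 xc, f x = 0 := by
  obtain ⟨h0, hhalf⟩ := hxc
  have hpi := Real.pi_pos
  -- positivity of sin and cos on the relevant ranges
  have hcos : ∀ x ∈ Set.Icc 0 xc, 0 < Real.cos x := fun x hx =>
    Real.cos_pos_of_mem_Ioo ⟨by linarith [hx.1], by linarith [hx.2]⟩
  have hsin : ∀ x ∈ Set.Ioc 0 xc, 0 < Real.sin x := fun x hx =>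
    Real.sin_pos_of_pos_of_lt_pi hx.1 (by linarith [hx.2])
  set f1 : ℝ → ℝ := derivWithin f (Set.Icc 0 xc) with hf1def
  have hI : UniqueDiffOn ℝ (Set.Icc (0:ℝ) xc) := uniqueDiffOn_Icc h0
  have hf1 : ContDiffOn ℝ 1 f1 (Set.Icc 0 xc) := hreg.derivWithin hI (by norm_num)
  have hf1c : ContinuousOn f1 (Set.Icc 0 xc) := hf1.continuousOn
  have hfc : ContinuousOn f (Set.Icc 0 xc) := hreg.continuousOn
  -- interior facts
  have hsub : Set.Ioo 0 xc ⊆ Set.Icc 0 xc := Set.Ioo_subset_Icc_self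
  have hfd : ∀ x ∈ Set.Ioo 0 xc, HasDerivAt f (f1 x) x := by
    intro x hx
    have hmem : Set.Icc 0 xc ∈ 𝓝 x := Icc_mem_nhds hx.1 hx.2
    have := ((hreg.differentiableOn (by norm_num)) x (hsub hx)).differentiableAt hmem
    have h1 : f1 x = deriv f x := derivWithin_of_mem_nhds hmem
    rw [h1]; exact this.hasDerivAt
  have hf1eq : ∀ x ∈ Set.Ioo 0 xc, f1 x = deriv f x := fun x hx =>
    derivWithin_of_mem_nhds (Icc_mem_nhds hx.1 hx.2)
  have hf1d : ∀ x ∈ Set.Ioo 0 xc, HasDerivAt f1 (deriv (deriv f) x) x := by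
    intro x hx
    have hmem : Set.Icc 0 xc ∈ 𝓝 x := Icc_mem_nhds hx.1 hx.2
    have hd : DifferentiableAt ℝ f1 x :=
      ((hf1.differentiableOn (by norm_num)) x (hsub hx)).differentiableAt hmem
    have hev : f1 =ᶠ[𝓝 x] deriv f := by
      filter_upwards [Ioo_mem_nhds hx.1 hx.2] with y hy
      exact hf1eq y hy
    have : deriv f1 x = deriv (deriv f) x := hev.deriv_eq
    rw [← this]; exact hd.hasDerivAt
  -- the (modified) Wronskian with sin
  set g : ℝ → ℝ := fun x => (f1 x * Real.sin x - f x * Real.cos x) * Real.cos x with hgdef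
  have hgc : ContinuousOn g (Set.Icc 0 xc) := by
    apply ContinuousOn.mul _ (Real.continuous_cos.continuousOn)
    exact (hf1c.mul Real.continuous_sin.continuousOn).sub
      (hfc.mul Real.continuous_cos.continuousOn)
  have hgd : ∀ x ∈ Set.Ioo 0 xc, HasDerivAt g 0 x := by
    intro x hx
    have hcx : 0 < Real.cos x := hcos x (hsub hx)
    have hW : HasDerivAt g
        (((deriv (deriv f) x * Real.sin x + f1 x * Real.cos x)
          - (f1 x * Real.cos x + f x * (-Real.sin x))) * Real.cos x
          + (f1 x * Real.sin x - f x * Real.cos x) * (-Real.sin x)) x := by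
      exact ((((hf1d x hx).mul (Real.hasDerivAt_sin x)).sub
        ((hfd x hx).mul (Real.hasDerivAt_cos x)))).mul (Real.hasDerivAt_cos x)
    convert hW using 1
    have hο := hode x hx
    rw [← hf1eq x hx] at hο
    have htan : Real.tan x = Real.sin x / Real.cos x := Real.tan_eq_sin_div_cos x
    have hd2 : deriv (deriv f) x = Real.sin x / Real.cos x * f1 x - 2 * f x := by
      rw [htan] at hο; linarith
    rw [hd2]
    field_simp
    ring
  -- g is constant on (0, xc]
  have hgconst : ∀ x ∈ Set.Ioc 0 xc, g xc = g x := by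
    intro x hx
    have key := constant_of_has_deriv_right_zero (f := g) (a := x) (b := xc)
      (hgc.mono (Set.Icc_subset_Icc (le_of_lt hx.1) le_rfl))
      (fun t ht => ((hgd t ⟨lt_of_lt_of_le hx.1 ht.1, ht.2⟩).hasDerivWithinAt))
    exact key xc ⟨hx.2, le_rfl⟩
  -- g xc = g 0 = 0 by continuity
  have hg0 : g 0 = 0 := by simp [hgdef, hdir]
  have hgxc : g xc = 0 := by
    haveI : (𝓝[Set.Ioo 0 xc] (0:ℝ)).NeBot := by
      refine mem_closure_iff_nhdsWithin_neBot.mp ?_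
      rw [closure_Ioo (ne_of_lt h0)]
      exact ⟨le_rfl, le_of_lt h0⟩
    have t1 : Tendsto g (𝓝[Set.Ioo 0 xc] 0) (𝓝 (g 0)) :=
      ((hgc.continuousWithinAt ⟨le_rfl, le_of_lt h0⟩).mono hsub)
    have t2 : Tendsto g (𝓝[Set.Ioo 0 xc] 0) (𝓝 (g xc)) := by
      refine Tendsto.congr' ?_ tendsto_const_nhds
      filter_upwards [self_mem_nhdsWithin] with y hy
      exact hgconst y ⟨hy.1, le_of_lt hy.2⟩
    rw [← hg0]
    exact tendsto_nhds_unique t2 t1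
  -- Wronskian vanishes on (0, xc]
  have hWz : ∀ x ∈ Set.Ioc 0 xc, f1 x * Real.sin x - f x * Real.cos x = 0 := by
    intro x hx
    have h1 : g x = 0 := by rw [← hgconst x hx, hgxc]
    have hcx : Real.cos x ≠ 0 := ne_of_gt (hcos x ⟨le_of_lt hx.1, hx.2⟩)
    have := mul_eq_zero.mp h1
    tauto
  -- f xc = 0 from Robin condition
  have hsxc : 0 < Real.sin xc := hsin xc ⟨h0, le_rfl⟩
  have hcxc : 0 < Real.cos xc := hcos xc ⟨le_of_lt h0, le_rfl⟩
  have hWxc := hWz xc ⟨h0, le_rfl⟩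
  have hfxc : f xc = 0 := by
    by_contra hfne
    -- from Wronskian: f1 xc = f xc * cos xc / sin xc; Robin gives sin² = cos²
    have hf1xc : f1 xc * Real.sin xc = f xc * Real.cos xc := by linarith
    have hrob' : -(Real.cos xc / Real.sin xc) * f1 xc + f xc = 0 := hrob
    have hsq : Real.sin xc ^ 2 = Real.cos xc ^ 2 := by
      have h1 : Real.cos xc * f1 xc = f xc * Real.sin xc := by
        field_simp at hrob'
        linarith
      have h2 : f xc * Real.cos xc ^ 2 = f xc * Real.sin xc ^ 2 := by
        nlinarith [hf1xc, h1]
      have := mul_left_cancel₀ hfne (by linarith : f xc * Real.cos xc ^ 2 = f xc * Real.sin xc ^ 2)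
      nlinarith
    have hsc : Real.sin xc = Real.cos xc := by
      nlinarith [sq_nonneg (Real.sin xc - Real.cos xc)]
    -- sin xc = cos xc = sin (π/2 - xc) forces xc = π/4
    apply hne
    have : Real.sin xc = Real.sin (Real.pi / 2 - xc) := by
      rw [Real.sin_pi_div_two_sub]; exact hsc
    have hinj : xc = Real.pi / 2 - xc := Real.injOn_sin
      ⟨by linarith, by linarith⟩ ⟨by linarith, by linarith⟩ this
    linarith
  -- now f/sin is constant on (0, xc], equal to f xc / sin xc = 0
  intro x hx
  rcases eq_or_lt_of_le hx.1 with h | hx0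
  · rw [← h]; exact hdir
  rcases eq_or_lt_of_le hx.2 with h | hxlt
  · rw [h]; exact hfxc
  -- x ∈ (0, xc)
  set k : ℝ → ℝ := fun y => f y / Real.sin y with hkdef
  have hkc : ContinuousOn k (Set.Icc x xc) := by
    apply ContinuousOn.div (hfc.mono (Set.Icc_subset_Icc (le_of_lt hx0) le_rfl))
      (Real.continuous_sin.continuousOn)
    intro t ht
    exact ne_of_gt (hsin t ⟨lt_of_lt_of_le hx0 ht.1, ht.2⟩)
  have hkd : ∀ t ∈ Set.Ico x xc, HasDerivWithinAt k 0 (Set.Ici t) t := by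
    intro t ht
    have htI : t ∈ Set.Ioo 0 xc := ⟨lt_of_lt_of_le hx0 ht.1, ht.2⟩
    have hst : Real.sin t ≠ 0 := ne_of_gt (hsin t ⟨htI.1, le_of_lt htI.2⟩)
    have hD : HasDerivAt k ((f1 t * Real.sin t - f t * Real.cos t) / Real.sin t ^ 2) t :=
      (hfd t htI).div (Real.hasDerivAt_sin t) hst
    have : (f1 t * Real.sin t - f t * Real.cos t) / Real.sin t ^ 2 = 0 := by
      rw [hWz t ⟨htI.1, le_of_lt htI.2⟩]; simp
    rw [this] at hD
    exact hD.hasDerivWithinAt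
  have hkconst := constant_of_has_deriv_right_zero hkc hkd xc ⟨le_of_lt hxlt, le_rfl⟩
  have hkx : k xc = 0 := by simp [hkdef, hfxc]
  rw [hkx] at hkconst
  have hsx : Real.sin x ≠ 0 := ne_of_gt (hsin x ⟨hx0, hx.2⟩)
  have : f x / Real.sin x = 0 := hkconst.symm
  field_simp at this
  simpa using this
end
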